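/- (Theorem 4.1, first case) Let p be an odd prime, G a finite group, G' ≤ G a subgroup of index 2p^2, and λ : G → Equiv.Perm (G ⧸ G') the action by left translation on left cosets. If there exists a regular subgroup of Equiv.Perm (G ⧸ G') isomorphic to ZMod p × ZMod (2p) that is normalized by λ(G), then there exists a regular subgroup of Equiv.Perm (G ⧸ G') isomorphic to the generalized dihedral group (C_p × C_p) ⋊ C_2 that is normalized by λ(G). -/

import Mathlib

/-- The holomorph of a group `X`: the normalizer in `Equiv.Perm X` of the image of the
left regular representation of `X`. -/
def Hol (X : Type*) [Group X] : Subgroup (Equiv.Perm X) :=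
  Subgroup.normalizer ((MulAction.toPermHom X X).range : Set (Equiv.Perm X))

/-- A subgroup `S` of `Equiv.Perm X` acts regularly on `X`: the action is transitive and
the stabilizer of every point is trivial. -/
def IsRegularSubgroup {X : Type*} (S : Subgroup (Equiv.Perm X)) : Prop :=
  (∀ x y : X, ∃ s ∈ S, s x = y) ∧ ∀ s ∈ S, ∀ x : X, s x = x → s = 1

/-- The inversion automorphism of `C_p × C_p` (written multiplicatively). -/
def invAut (p : ℕ) : MulAut (Multiplicative (ZMod p × ZMod p)) :=
  MulEquiv.inv (Multiplicative (ZMod p × ZMod p))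

/-- The action of `C_2` on `C_p × C_p` by inversion. -/
def invHom (p : ℕ) : Multiplicative (ZMod 2) →* MulAut (Multiplicative (ZMod p × ZMod p)) where
  toFun g := invAut p ^ (Multiplicative.toAdd g).val
  map_one' := by simp
  map_mul' g h := by
    have h2 : invAut p ^ 2 = 1 := by
      refine MulEquiv.ext fun x => ?_
      rw [sq, MulAut.mul_apply]
      exact inv_inv x
    show invAut p ^ (Multiplicative.toAdd (g * h)).val = _
    rw [toAdd_mul, ZMod.val_add, ← pow_add]
    exact (pow_eq_pow_mod _ h2).symm

/-- The generalized dihedral group `(C_p × C_p) ⋊ C_2`: the semidirect product of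
`C_p × C_p` (written multiplicatively) by the group of order 2 acting by inversion. -/
abbrev GenDihedral (p : ℕ) : Type :=
  SemidirectProduct (Multiplicative (ZMod p × ZMod p)) (Multiplicative (ZMod 2)) (invHom p)

namespace GD

section ZModAux

variable (p : ℕ)

lemma aux_H (hp : p ≠ 0) (s : ℕ) :
    ((2 * (s % p) : ℕ) : ZMod (2*p)) = ((2 * s : ℕ) : ZMod (2*p)) := by
  conv_rhs => rw [← Nat.div_add_mod s p]
  have : 2 * (p * (s / p) + s % p) = (2*p) * (s/p) + 2 * (s % p) := by ring
  rw [this]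
  simp [Nat.cast_add, Nat.cast_mul, ZMod.natCast_self]

lemma aux_even (hp : p ≠ 0) (w : ZMod (2*p)) (hw : Even w.val) :
    ∃ v : ZMod p, ((2 * (v.val) : ℕ) : ZMod (2*p)) = w := by
  haveI : NeZero p := ⟨hp⟩
  refine ⟨((w.val / 2 : ℕ) : ZMod p), ?_⟩
  rw [ZMod.val_natCast, aux_H p hp, Nat.two_mul_div_two_of_even hw, ZMod.natCast_val,
    ZMod.cast_id]

lemma aux_odd (hodd : Odd p) (w : ZMod (2*p)) (hw : Odd w.val) :
    ∃ v : ZMod p, ((2 * (v.val) : ℕ) : ZMod (2*p)) + p = w := by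
  have hp : p ≠ 0 := by rintro rfl; simp [Nat.odd_iff] at hodd
  haveI : NeZero p := ⟨hp⟩
  refine ⟨(((w.val + p) / 2 : ℕ) : ZMod p), ?_⟩
  rw [ZMod.val_natCast, aux_H p hp, Nat.two_mul_div_two_of_even (hw.add_odd hodd)]
  push_cast
  rw [ZMod.natCast_val, ZMod.cast_id]
  have h2p : ((p : ZMod (2*p)) + p) = 0 := by
    have : ((2 * p : ℕ) : ZMod (2*p)) = 0 := ZMod.natCast_self _
    push_cast at this
    linear_combination this
  linear_combination h2p

lemma aux_pz (hp : p ≠ 0) (w : ZMod (2*p)) (hw : (p : ZMod (2*p)) * w = 0) : Even w.val := by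
  haveI : NeZero p := ⟨hp⟩
  haveI : NeZero (2*p) := ⟨by omega⟩
  have : ((p * w.val : ℕ) : ZMod (2*p)) = 0 := by
    push_cast
    rw [ZMod.natCast_val, ZMod.cast_id]
    exact hw
  rw [ZMod.natCast_eq_zero_iff] at this
  obtain ⟨k, hk⟩ := this
  have h2 : p * w.val = p * (2 * k) := by rw [hk]; ring
  have h3 := Nat.eq_of_mul_eq_mul_left (Nat.pos_of_ne_zero hp) h2
  exact ⟨k, by omega⟩

lemma aux_pi (hp : p ≠ 0) (w : ZMod (2*p)) (hw : Even w.val) :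
    (ZMod.castHom (dvd_mul_right 2 p) (ZMod 2)) w = 0 := by
  haveI : NeZero (2*p) := ⟨by omega⟩
  rw [ZMod.castHom_apply, ← ZMod.natCast_val, ZMod.natCast_eq_zero_iff]
  exact hw.two_dvd

lemma aux_two_mul_even (hp : p ≠ 0) (w : ZMod (2*p)) : Even (2 * w).val := by
  haveI : NeZero (2*p) := ⟨by omega⟩
  have : (2 * w) = ((2 * w.val : ℕ) : ZMod (2*p)) := by
    push_cast
    rw [ZMod.natCast_val, ZMod.cast_id]
  rw [this, ZMod.val_natCast, Nat.even_iff, Nat.mod_mod_of_dvd _ (dvd_mul_right 2 p)]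
  omega

end ZModAux

section ZModAux2

variable (p : ℕ)

lemma aux_two_mul_zero (hp : p ≠ 0) (w : ZMod (2*p)) (hw : 2 * w = 0) :
    w = 0 ∨ w = (p : ZMod (2*p)) := by
  haveI : NeZero p := ⟨hp⟩
  haveI : NeZero (2*p) := ⟨by omega⟩
  have h1 : ((2 * w.val : ℕ) : ZMod (2*p)) = 0 := by
    push_cast
    rw [ZMod.natCast_val, ZMod.cast_id]
    exact hw
  rw [ZMod.natCast_eq_zero_iff] at h1
  obtain ⟨k, hk⟩ := h1
  have hlt : w.val < 2 * p := ZMod.val_lt w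
  have hcast : ((w.val : ℕ) : ZMod (2*p)) = w := by rw [ZMod.natCast_val, ZMod.cast_id]
  have hk' : 2 * w.val = 2 * (p * k) := by rw [hk]; ring
  have hwv : w.val = p * k := Nat.eq_of_mul_eq_mul_left (by norm_num) hk'
  have hk2 : k = 0 ∨ k = 1 := by
    rcases Nat.lt_or_ge k 2 with h | h
    · omega
    · exfalso; nlinarith [Nat.pos_of_ne_zero hp]
  rcases hk2 with rfl | rfl
  · left
    rw [← hcast, hwv]
    simp
  · right
    rw [← hcast, hwv]
    simp

lemma aux_two_mul_zero_p (hp : p.Prime) (hodd : Odd p) (u : ZMod p) (hu : 2 * u = 0) :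
    u = 0 := by
  haveI := Fact.mk hp
  have h2 : (2 : ZMod p) ≠ 0 := by
    have : ((2 : ℕ) : ZMod p) ≠ 0 := by
      rw [Ne, ZMod.natCast_eq_zero_iff]
      intro hd
      have := Nat.le_of_dvd (by norm_num) hd
      have h3 := hp.two_le
      interval_cases p
      · simp [Nat.odd_iff] at hodd
    simpa using this
  have := mul_eq_zero.mp hu
  tauto

lemma aux_j2_inj (hp : p ≠ 0) (v : ZMod p) (hv : ((2 * v.val : ℕ) : ZMod (2*p)) = 0) :
    v = 0 := by
  haveI : NeZero p := ⟨hp⟩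
  rw [ZMod.natCast_eq_zero_iff] at hv
  obtain ⟨k, hk⟩ := hv
  have hlt : v.val < p := ZMod.val_lt v
  have hv0 : v.val = 0 := by
    rcases Nat.eq_zero_or_pos k with rfl | hk1
    · omega
    · nlinarith
  have hcast : ((v.val : ℕ) : ZMod p) = v := by rw [ZMod.natCast_val, ZMod.cast_id]
  rw [← hcast, hv0]
  simp

lemma aux_p_ne_zero (hp : p ≠ 0) : (p : ZMod (2*p)) ≠ 0 := by
  haveI : NeZero (2*p) := ⟨by omega⟩
  rw [Ne, ZMod.natCast_eq_zero_iff]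
  intro hd
  have := Nat.le_of_dvd (Nat.pos_of_ne_zero hp) hd
  omega

lemma aux_p_mod_two (hodd : Odd p) : ((p : ℕ) : ZMod 2) = 1 := by
  rw [← ZMod.natCast_mod p 2, Nat.odd_iff.mp hodd, Nat.cast_one]

end ZModAux2


/-- hom from C2 determined by an involution -/
def C2hom {H : Type*} [Group H] (s : H) (hs : s * s = 1) : Multiplicative (ZMod 2) →* H where
  toFun g := s ^ (Multiplicative.toAdd g).val
  map_one' := by simp
  map_mul' g h := by
    have h2 : s ^ 2 = 1 := by rw [sq]; exact hs
    show s ^ (Multiplicative.toAdd (g * h)).val = _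
    rw [toAdd_mul, ZMod.val_add, ← pow_add]
    exact (pow_eq_pow_mod _ h2).symm

lemma C2hom_gen {H : Type*} [Group H] (s : H) (hs : s * s = 1) :
    C2hom s hs (Multiplicative.ofAdd 1) = s := by
  show s ^ (1 : ZMod 2).val = s
  have : (1 : ZMod 2).val = 1 := rfl
  rw [this, pow_one]

section Defs

variable {X : Type*} (p : ℕ) (N : Subgroup (Equiv.Perm X))
  (e : ↥N ≃* Multiplicative (ZMod p × ZMod (2 * p)))
  (x₀ : X) (hreg : IsRegularSubgroup N)

include hreg in
lemma Ninj {a b : ↥N} (hab : (a : Equiv.Perm X) x₀ = (b : Equiv.Perm X) x₀) : a = b := by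
  have h1 : ((b⁻¹ * a : ↥N) : Equiv.Perm X) x₀ = x₀ := by
    rw [Subgroup.coe_mul, Subgroup.coe_inv, Equiv.Perm.mul_apply, hab]
    simp
  have h2 := hreg.2 _ (b⁻¹ * a).2 x₀ h1
  have h3 : (b⁻¹ * a : ↥N) = 1 := Subtype.ext (by rw [h2]; rfl)
  exact (inv_mul_eq_one.mp h3).symm

/-- the orbit bijection -/
noncomputable def bij : ↥N ≃ X :=
  Equiv.ofBijective (fun n => (n : Equiv.Perm X) x₀)
    ⟨fun _ _ hab => Ninj N x₀ hreg hab, fun x => by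
      obtain ⟨s, hs, hsx⟩ := hreg.1 x₀ x
      exact ⟨⟨s, hs⟩, hsx⟩⟩

lemma bij_apply (n : ↥N) : bij N x₀ hreg n = (n : Equiv.Perm X) x₀ := rfl

lemma bij_mul (n m : ↥N) : (n : Equiv.Perm X) (bij N x₀ hreg m) = bij N x₀ hreg (n * m) := by
  simp [bij_apply, Equiv.Perm.mul_apply]

/-- the inversion permutation -/
noncomputable def sigma : Equiv.Perm X :=
  ((bij N x₀ hreg).symm.trans (Equiv.inv ↥N)).trans (bij N x₀ hreg)

lemma sigma_bij (m : ↥N) : sigma N x₀ hreg (bij N x₀ hreg m) = bij N x₀ hreg m⁻¹ := by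
  simp [sigma, Equiv.inv]

include e in
lemma Ncomm (a b : ↥N) : a * b = b * a :=
  e.injective (by rw [map_mul, map_mul]; exact mul_comm _ _)

lemma sigma_sq : sigma N x₀ hreg * sigma N x₀ hreg = 1 := by
  ext x
  obtain ⟨m, rfl⟩ := (bij N x₀ hreg).surjective x
  simp [Equiv.Perm.mul_apply, sigma_bij]

include e in
lemma sigma_conj (n : ↥N) :
    sigma N x₀ hreg * (n : Equiv.Perm X) * sigma N x₀ hreg = ((n⁻¹ : ↥N) : Equiv.Perm X) := by
  ext x
  obtain ⟨m, rfl⟩ := (bij N x₀ hreg).surjective x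
  simp only [Equiv.Perm.mul_apply, sigma_bij, bij_mul]
  rw [mul_inv_rev, inv_inv]
  exact congrArg _ (Ncomm p N e m n⁻¹)

/-- the unique involution of N -/
noncomputable def tt : ↥N := e.symm (Multiplicative.ofAdd (0, (p : ZMod (2*p))))

lemma tt_sq : tt p N e ^ 2 = 1 := by
  apply e.injective
  rw [map_pow, tt, MulEquiv.apply_symm_apply, map_one, sq, ← ofAdd_add]
  have h2 : ((0 : ZMod p), (p : ZMod (2*p))) + (0, (p : ZMod (2*p))) = 0 := by
    have : ((p : ZMod (2*p)) + p) = 0 := by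
      rw [← Nat.cast_add, ← two_mul, ZMod.natCast_self]
    exact Prod.ext (by simp) (by simpa using this)
  rw [h2, ofAdd_zero]

lemma tt_ne (hp : p ≠ 0) : tt p N e ≠ 1 := by
  intro hc
  have : (Multiplicative.ofAdd ((0 : ZMod p), (p : ZMod (2*p)))) = 1 := by
    rw [← MulEquiv.apply_symm_apply e (Multiplicative.ofAdd (0, (p : ZMod (2*p)))), ← tt, hc,
      map_one]
  have h2 : ((0 : ZMod p), (p : ZMod (2*p))) = 0 := by
    simpa using congrArg Multiplicative.toAdd this
  exact aux_p_ne_zero p hp (by simpa using congrArg Prod.snd h2)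

lemma tt_pow_p (hodd : Odd p) : tt p N e ^ p = tt p N e := by
  obtain ⟨k, hk⟩ := hodd
  have hk' : tt p N e ^ (2 * k + 1) = tt p N e := by
    rw [pow_add, pow_mul, tt_sq, one_pow, pow_one, one_mul]
  exact (congrArg (tt p N e ^ ·) hk).trans hk'

/-- the reflection: t * sigma -/
noncomputable def ss : Equiv.Perm X := (tt p N e : Equiv.Perm X) * sigma N x₀ hreg

lemma ss_sq : ss p N e x₀ hreg * ss p N e x₀ hreg = 1 := by
  have h := sigma_conj p N e x₀ hreg (tt p N e)
  show (tt p N e : Equiv.Perm X) * sigma N x₀ hreg * ((tt p N e : Equiv.Perm X) * sigma N x₀ hreg) = 1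
  have h2 : sigma N x₀ hreg * (tt p N e : Equiv.Perm X) * sigma N x₀ hreg
      = ((tt p N e)⁻¹ : ↥N) := h
  calc (tt p N e : Equiv.Perm X) * sigma N x₀ hreg * ((tt p N e : Equiv.Perm X) * sigma N x₀ hreg)
      = (tt p N e : Equiv.Perm X) * (sigma N x₀ hreg * (tt p N e : Equiv.Perm X) * sigma N x₀ hreg) := by
        group
    _ = (tt p N e : Equiv.Perm X) * ((tt p N e)⁻¹ : ↥N) := by rw [h2]
    _ = ((tt p N e * (tt p N e)⁻¹ : ↥N) : Equiv.Perm X) := by rw [Subgroup.coe_mul]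
    _ = 1 := by rw [mul_inv_cancel]; rfl

lemma ss_conj (a : ↥N) :
    ss p N e x₀ hreg * (a : Equiv.Perm X) * ss p N e x₀ hreg = ((a⁻¹ : ↥N) : Equiv.Perm X) := by
  show (tt p N e : Equiv.Perm X) * sigma N x₀ hreg * (a : Equiv.Perm X)
      * ((tt p N e : Equiv.Perm X) * sigma N x₀ hreg) = _
  have h : sigma N x₀ hreg * ((a : Equiv.Perm X) * (tt p N e : Equiv.Perm X)) * sigma N x₀ hreg
      = (((a * tt p N e)⁻¹ : ↥N) : Equiv.Perm X) := by
    rw [← Subgroup.coe_mul]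
    exact sigma_conj p N e x₀ hreg _
  calc (tt p N e : Equiv.Perm X) * sigma N x₀ hreg * (a : Equiv.Perm X)
      * ((tt p N e : Equiv.Perm X) * sigma N x₀ hreg)
      = (tt p N e : Equiv.Perm X)
        * (sigma N x₀ hreg * ((a : Equiv.Perm X) * (tt p N e : Equiv.Perm X)) * sigma N x₀ hreg) := by
        group
    _ = (tt p N e : Equiv.Perm X) * (((a * tt p N e)⁻¹ : ↥N) : Equiv.Perm X) := by rw [h]
    _ = ((tt p N e * (a * tt p N e)⁻¹ : ↥N) : Equiv.Perm X) := by rw [Subgroup.coe_mul]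
    _ = ((a⁻¹ : ↥N) : Equiv.Perm X) := by
        congr 1
        rw [mul_inv_rev]
        group

/-- embedding ZMod p → ZMod 2p as an additive hom, 1 ↦ 2 -/
noncomputable def j2 (hp : p ≠ 0) : ZMod p →+ ZMod (2*p) :=
  ZMod.lift p ⟨(AddMonoidHom.mulLeft (2 : ZMod (2*p))).comp (Int.castAddHom (ZMod (2*p))), by
    show (2 : ZMod (2*p)) * ((p : ℤ) : ZMod (2*p)) = 0
    have h0 : ((2 * p : ℕ) : ZMod (2*p)) = 0 := ZMod.natCast_self _
    push_cast at h0 ⊢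
    exact h0⟩

lemma j2_apply (hp : p ≠ 0) (v : ZMod p) :
    j2 p hp v = ((2 * v.val : ℕ) : ZMod (2*p)) := by
  haveI : NeZero p := ⟨hp⟩
  have h1 : v = ((v.val : ℤ) : ZMod p) := by
    push_cast
    rw [ZMod.natCast_val, ZMod.cast_id]
  conv_lhs => rw [h1]
  rw [j2, ZMod.lift_coe]
  show (2 : ZMod (2*p)) * ((v.val : ℤ) : ZMod (2*p)) = _
  push_cast
  ring

/-- embedding C_p × C_p → C_p × C_2p -/
noncomputable def jj (hp : p ≠ 0) :
    Multiplicative (ZMod p × ZMod p) →* Multiplicative (ZMod p × ZMod (2*p)) :=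
  AddMonoidHom.toMultiplicative ((AddMonoidHom.id (ZMod p)).prodMap (j2 p hp))

lemma jj_apply (hp : p ≠ 0) (v : ZMod p × ZMod p) :
    jj p hp (Multiplicative.ofAdd v) = Multiplicative.ofAdd (v.1, j2 p hp v.2) := rfl

lemma jj_apply' (hp : p ≠ 0) (a : Multiplicative (ZMod p × ZMod p)) :
    jj p hp a = Multiplicative.ofAdd ((Multiplicative.toAdd a).1,
      j2 p hp (Multiplicative.toAdd a).2) := rfl

lemma jj_inj (hp : p ≠ 0) : Function.Injective (jj p hp) := by
  intro a b hab
  rw [jj_apply', jj_apply'] at hab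
  have h := congrArg Multiplicative.toAdd hab
  simp only [toAdd_ofAdd] at h
  obtain ⟨h1, h2⟩ := Prod.ext_iff.mp h
  dsimp only at h1 h2
  have h3 : j2 p hp ((Multiplicative.toAdd a).2 - (Multiplicative.toAdd b).2) = 0 := by
    rw [map_sub, h2, sub_self]
  rw [j2_apply] at h3
  have h4 := aux_j2_inj p hp _ h3
  have h5 : (Multiplicative.toAdd a).2 = (Multiplicative.toAdd b).2 := by
    rwa [sub_eq_zero] at h4
  have : Multiplicative.toAdd a = Multiplicative.toAdd b := Prod.ext h1 h5
  exact Multiplicative.toAdd.injective this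

lemma expp (n : Multiplicative (ZMod p × ZMod p)) : n ^ p = 1 := by
  haveI : NeZero 1 := ⟨one_ne_zero⟩
  apply Multiplicative.toAdd.injective
  rw [toAdd_pow]
  show p • Multiplicative.toAdd n = (0 : ZMod p × ZMod p)
  have : ∀ v : ZMod p, p • v = 0 := fun v => by
    rw [nsmul_eq_mul, ZMod.natCast_self, zero_mul]
  exact Prod.ext (this _) (this _)

lemma exp2p (m : Multiplicative (ZMod p × ZMod (2*p))) : m ^ (2*p) = 1 := by
  apply Multiplicative.toAdd.injective
  rw [toAdd_pow]
  show (2*p) • Multiplicative.toAdd m = (0 : ZMod p × ZMod (2*p))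
  refine Prod.ext ?_ ?_
  · show (2*p) • (Multiplicative.toAdd m).1 = 0
    rw [nsmul_eq_mul, Nat.cast_mul, ZMod.natCast_self, mul_zero, zero_mul]
  · show (2*p) • (Multiplicative.toAdd m).2 = 0
    rw [nsmul_eq_mul, ZMod.natCast_self, zero_mul]

/-- the map C_p × C_p → Perm X -/
noncomputable def f1 (hp : p ≠ 0) : Multiplicative (ZMod p × ZMod p) →* Equiv.Perm X :=
  N.subtype.comp (e.symm.toMonoidHom.comp (jj p hp))

lemma f1_apply (hp : p ≠ 0) (n : Multiplicative (ZMod p × ZMod p)) :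
    f1 p N e hp n = ((e.symm (jj p hp n) : ↥N) : Equiv.Perm X) := rfl

lemma an_pow (hp : p ≠ 0) (n : Multiplicative (ZMod p × ZMod p)) :
    (e.symm (jj p hp n)) ^ p = 1 := by
  have : (jj p hp n) ^ p = 1 := by rw [← map_pow, expp, map_one]
  rw [← map_pow, this, map_one]

/-- the map C_2 → Perm X sending the generator to t * sigma -/
noncomputable def f2 : Multiplicative (ZMod 2) →* Equiv.Perm X :=
  C2hom (ss p N e x₀ hreg) (ss_sq p N e x₀ hreg)

lemma f2_gen : f2 p N e x₀ hreg (Multiplicative.ofAdd 1) = ss p N e x₀ hreg :=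
  C2hom_gen _ _

lemma hg_cases (g : Multiplicative (ZMod 2)) : g = 1 ∨ g = Multiplicative.ofAdd 1 := by
  revert g; decide

lemma inv_eq_ss : (ss p N e x₀ hreg)⁻¹ = ss p N e x₀ hreg :=
  inv_eq_of_mul_eq_one_right (ss_sq p N e x₀ hreg)

lemma compat (hp : p ≠ 0) : ∀ g, (f1 p N e hp).comp ((invHom p g).toMonoidHom)
    = (MulAut.conj (f2 p N e x₀ hreg g)).toMonoidHom.comp (f1 p N e hp) := by
  intro g
  rcases hg_cases g with rfl | rfl
  · ext n
    simp
  · refine MonoidHom.ext fun n => ?_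
    show f1 p N e hp ((invHom p (Multiplicative.ofAdd 1)) n)
      = f2 p N e x₀ hreg (Multiplicative.ofAdd 1) * f1 p N e hp n
        * (f2 p N e x₀ hreg (Multiplicative.ofAdd 1))⁻¹
    have h1 : (invHom p (Multiplicative.ofAdd 1)) n = n⁻¹ := by
      show (invAut p ^ (Multiplicative.toAdd (Multiplicative.ofAdd (1 : ZMod 2))).val) n = n⁻¹
      have : (Multiplicative.toAdd (Multiplicative.ofAdd (1 : ZMod 2))).val = 1 := rfl
      rw [this, pow_one]
      rfl
    rw [h1, f2_gen, inv_eq_ss, f1_apply, f1_apply, map_inv, map_inv, Subgroup.coe_inv]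
    exact (ss_conj p N e x₀ hreg _).symm

/-- the homomorphism GenDihedral p →* Perm X -/
noncomputable def psi (hp : p ≠ 0) : GenDihedral p →* Equiv.Perm X :=
  SemidirectProduct.lift (f1 p N e hp) (f2 p N e x₀ hreg) (compat p N e x₀ hreg hp)

lemma psi_apply (hp : p ≠ 0) (x : GenDihedral p) :
    psi p N e x₀ hreg hp x = f1 p N e hp x.left * f2 p N e x₀ hreg x.right := rfl

/-- the dihedral regular subgroup -/
noncomputable def MM (hp : p ≠ 0) : Subgroup (Equiv.Perm X) := (psi p N e x₀ hreg hp).range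

lemma crit (hp : p ≠ 0) (a : ↥N) (ha : a ^ p = 1) :
    ∃ n, e a = jj p hp n := by
  have hp2 : (e a) ^ p = 1 := by rw [← map_pow, ha, map_one]
  have hw : p • (Multiplicative.toAdd (e a)) = 0 := by
    have := congrArg Multiplicative.toAdd hp2
    rwa [toAdd_pow, toAdd_one] at this
  have hw2 : (p : ZMod (2*p)) * (Multiplicative.toAdd (e a)).2 = 0 := by
    have := congrArg Prod.snd hw
    rwa [Prod.smul_snd, nsmul_eq_mul] at this
  obtain ⟨v, hv⟩ := aux_even p hp _ (aux_pz p hp _ hw2)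
  refine ⟨Multiplicative.ofAdd ((Multiplicative.toAdd (e a)).1, v), ?_⟩
  rw [jj_apply, j2_apply, hv]
  exact (ofAdd_toAdd (e a)).symm.trans (by rw [← Prod.mk.eta (p := Multiplicative.toAdd (e a))])

lemma memM_one (hp : p ≠ 0) (a : ↥N) (ha : a ^ p = 1) :
    (a : Equiv.Perm X) ∈ MM p N e x₀ hreg hp := by
  obtain ⟨n, hn⟩ := crit p N e hp a ha
  refine ⟨SemidirectProduct.inl n, ?_⟩
  rw [psi, SemidirectProduct.lift_inl, f1_apply, ← hn, MulEquiv.symm_apply_apply]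

lemma memM_ss (hp : p ≠ 0) (a : ↥N) (ha : a ^ p = 1) :
    (a : Equiv.Perm X) * ss p N e x₀ hreg ∈ MM p N e x₀ hreg hp := by
  obtain ⟨n, hn⟩ := crit p N e hp a ha
  refine ⟨⟨n, Multiplicative.ofAdd 1⟩, ?_⟩
  rw [psi_apply]
  show f1 p N e hp n * f2 p N e x₀ hreg (Multiplicative.ofAdd 1) = _
  rw [f2_gen, f1_apply, ← hn, MulEquiv.symm_apply_apply]

lemma bij_one : bij N x₀ hreg 1 = x₀ := by
  rw [bij_apply]
  rfl

lemma sigma_x0 : sigma N x₀ hreg x₀ = x₀ := by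
  have h := sigma_bij N x₀ hreg 1
  rw [inv_one] at h
  rwa [bij_one] at h

lemma afix (hp : p ≠ 0) (hodd : Odd p) (a m₀ : ↥N) (ha : a ^ p = 1)
    (hfix : ((a : Equiv.Perm X) * ss p N e x₀ hreg) (bij N x₀ hreg m₀) = bij N x₀ hreg m₀) :
    False := by
  -- compute the lhs
  have hcomp : ((a : Equiv.Perm X) * ss p N e x₀ hreg) (bij N x₀ hreg m₀)
      = bij N x₀ hreg (a * (tt p N e * m₀⁻¹)) := by
    rw [Equiv.Perm.mul_apply]
    show (a : Equiv.Perm X) (((tt p N e : Equiv.Perm X) * sigma N x₀ hreg) (bij N x₀ hreg m₀)) = _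
    rw [Equiv.Perm.mul_apply, sigma_bij, bij_mul, bij_mul]
  rw [hcomp] at hfix
  have heq : a * tt p N e = m₀ * m₀ := by
    have h2 := (bij N x₀ hreg).injective hfix
    have h3 : a * (tt p N e * m₀⁻¹) * m₀ = m₀ * m₀ := by rw [h2]
    rw [← h3]
    group
  -- pass to second coordinates
  obtain ⟨n, hn⟩ := crit p N e hp a ha
  have heq2 := congrArg (fun z => (Multiplicative.toAdd (e z)).2) heq
  simp only [map_mul, toAdd_mul, Prod.snd_add] at heq2
  rw [hn] at heq2
  rw [jj_apply'] at heq2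
  have het : (Multiplicative.toAdd (e (tt p N e))).2 = (p : ZMod (2*p)) := by
    rw [tt, MulEquiv.apply_symm_apply]
    rfl
  rw [het] at heq2
  have heq3 : j2 p hp (Multiplicative.toAdd n).2 + (p : ZMod (2*p))
      = (Multiplicative.toAdd (e m₀)).2 + (Multiplicative.toAdd (e m₀)).2 := by
    simpa using heq2
  -- cast to ZMod 2
  have hcast := congrArg (ZMod.castHom (dvd_mul_right 2 p) (ZMod 2)) heq3
  rw [map_add, map_add, map_natCast] at hcast
  have hpi : (ZMod.castHom (dvd_mul_right 2 p) (ZMod 2)) (j2 p hp (Multiplicative.toAdd n).2)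
      = 0 := by
    apply aux_pi p hp
    rw [j2_apply]
    have h4 : ((2 * ((Multiplicative.toAdd n).2.val) : ℕ) : ZMod (2*p))
        = 2 * (((Multiplicative.toAdd n).2.val : ℕ) : ZMod (2*p)) := by push_cast; ring
    rw [h4]
    exact aux_two_mul_even p hp _
  rw [hpi, aux_p_mod_two p hodd, zero_add] at hcast
  have hself : ∀ z : ZMod 2, z + z = 0 := by decide
  rw [hself] at hcast
  exact one_ne_zero hcast

lemma Mfree (hp : p ≠ 0) (hodd : Odd p) :
    ∀ m ∈ MM p N e x₀ hreg hp, ∀ x : X, m x = x → m = 1 := by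
  rintro m ⟨⟨n, g⟩, rfl⟩ x hx
  rcases hg_cases g with rfl | rfl
  · have hm : psi p N e x₀ hreg hp ⟨n, 1⟩ = ((e.symm (jj p hp n) : ↥N) : Equiv.Perm X) := by
      rw [psi_apply]
      show f1 p N e hp n * f2 p N e x₀ hreg 1 = _
      rw [map_one, mul_one, f1_apply]
    rw [hm] at hx ⊢
    exact hreg.2 _ (e.symm (jj p hp n)).2 x hx
  · exfalso
    have hm : psi p N e x₀ hreg hp ⟨n, Multiplicative.ofAdd 1⟩
        = ((e.symm (jj p hp n) : ↥N) : Equiv.Perm X) * ss p N e x₀ hreg := by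
      rw [psi_apply]
      show f1 p N e hp n * f2 p N e x₀ hreg (Multiplicative.ofAdd 1) = _
      rw [f2_gen, f1_apply]
    rw [hm] at hx
    obtain ⟨m₀, rfl⟩ := (bij N x₀ hreg).surjective x
    exact afix p N e x₀ hreg hp hodd _ m₀ (an_pow p N e hp n) hx

lemma psi_inj (hp : p ≠ 0) (hodd : Odd p) : Function.Injective (psi p N e x₀ hreg hp) := by
  rw [injective_iff_map_eq_one]
  rintro ⟨n, g⟩ hx
  rcases hg_cases g with rfl | rfl
  · have hm : psi p N e x₀ hreg hp ⟨n, 1⟩ = ((e.symm (jj p hp n) : ↥N) : Equiv.Perm X) := by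
      rw [psi_apply]
      show f1 p N e hp n * f2 p N e x₀ hreg 1 = _
      rw [map_one, mul_one, f1_apply]
    rw [hm] at hx
    have h1 : e.symm (jj p hp n) = 1 := Subtype.ext (by rw [hx]; rfl)
    have h2 : jj p hp n = 1 := by
      have := congrArg e h1
      rwa [MulEquiv.apply_symm_apply, map_one] at this
    have h3 : n = 1 := jj_inj p hp (by rw [h2, map_one])
    rw [h3]
    rfl
  · exfalso
    have hm : psi p N e x₀ hreg hp ⟨n, Multiplicative.ofAdd 1⟩
        = ((e.symm (jj p hp n) : ↥N) : Equiv.Perm X) * ss p N e x₀ hreg := by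
      rw [psi_apply]
      show f1 p N e hp n * f2 p N e x₀ hreg (Multiplicative.ofAdd 1) = _
      rw [f2_gen, f1_apply]
    have hfix : (((e.symm (jj p hp n) : ↥N) : Equiv.Perm X) * ss p N e x₀ hreg)
        (bij N x₀ hreg 1) = bij N x₀ hreg 1 := by
      rw [← hm, hx]
      rfl
    exact afix p N e x₀ hreg hp hodd _ 1 (an_pow p N e hp n) hfix

lemma Mtrans_aux (hp : p ≠ 0) (hodd : Odd p) (x : X) :
    ∃ m ∈ MM p N e x₀ hreg hp, m x₀ = x := by
  obtain ⟨m₀, rfl⟩ := (bij N x₀ hreg).surjective x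
  rcases Nat.even_or_odd ((Multiplicative.toAdd (e m₀)).2.val) with hev | hod
  · obtain ⟨v, hv⟩ := aux_even p hp _ hev
    set n := Multiplicative.ofAdd ((Multiplicative.toAdd (e m₀)).1, v) with hn
    have ha : e.symm (jj p hp n) = m₀ := by
      apply e.injective
      rw [MulEquiv.apply_symm_apply, jj_apply, j2_apply, hv]
      exact ((ofAdd_toAdd (e m₀)).symm.trans
        (by rw [← Prod.mk.eta (p := Multiplicative.toAdd (e m₀))])).symm
    refine ⟨_, memM_one p N e x₀ hreg hp (e.symm (jj p hp n)) (an_pow p N e hp n), ?_⟩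
    rw [ha]
    rfl
  · obtain ⟨v, hv⟩ := aux_odd p hodd _ hod
    set n := Multiplicative.ofAdd ((Multiplicative.toAdd (e m₀)).1, v) with hn
    have ha : e.symm (jj p hp n) * tt p N e = m₀ := by
      apply e.injective
      rw [map_mul, MulEquiv.apply_symm_apply, jj_apply, tt, MulEquiv.apply_symm_apply,
        ← ofAdd_add]
      have : (((Multiplicative.toAdd (e m₀)).1, j2 p hp v) : ZMod p × ZMod (2*p))
          + ((0 : ZMod p), (p : ZMod (2*p))) = Multiplicative.toAdd (e m₀) := by
        rw [Prod.mk_add_mk, add_zero]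
        rw [j2_apply, hv]
      rw [this, ofAdd_toAdd]
    refine ⟨_, memM_ss p N e x₀ hreg hp (e.symm (jj p hp n)) (an_pow p N e hp n), ?_⟩
    have hss : ss p N e x₀ hreg x₀ = (tt p N e : Equiv.Perm X) x₀ := by
      show ((tt p N e : Equiv.Perm X) * sigma N x₀ hreg) x₀ = _
      rw [Equiv.Perm.mul_apply, sigma_x0]
    rw [Equiv.Perm.mul_apply, hss]
    show ((e.symm (jj p hp n) : ↥N) : Equiv.Perm X) (bij N x₀ hreg (tt p N e)) = _
    rw [bij_mul, ha]

lemma Mtrans (hp : p ≠ 0) (hodd : Odd p) :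
    ∀ x y : X, ∃ m ∈ MM p N e x₀ hreg hp, m x = y := by
  intro x y
  obtain ⟨mx, hmx, hmx2⟩ := Mtrans_aux p N e x₀ hreg hp hodd x
  obtain ⟨my, hmy, hmy2⟩ := Mtrans_aux p N e x₀ hreg hp hodd y
  refine ⟨my * mx⁻¹, mul_mem hmy (inv_mem hmx), ?_⟩
  rw [Equiv.Perm.mul_apply, ← hmx2, Equiv.Perm.inv_def, Equiv.symm_apply_apply, hmy2]

/-- conjugation by an element of the normalizer of N, as a hom N →* N -/
def phi (c : Equiv.Perm X) (hc : c ∈ Subgroup.normalizer (N : Set (Equiv.Perm X))) : ↥N →* ↥N where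
  toFun a := ⟨c * (a : Equiv.Perm X) * c⁻¹, (Subgroup.mem_normalizer_iff.mp hc _).mp a.2⟩
  map_one' := by
    apply Subtype.ext
    show c * 1 * c⁻¹ = 1
    group
  map_mul' a b := by
    apply Subtype.ext
    show c * ((a : Equiv.Perm X) * b) * c⁻¹
      = (c * (a : Equiv.Perm X) * c⁻¹) * (c * (b : Equiv.Perm X) * c⁻¹)
    group

lemma phi_coe (c : Equiv.Perm X) (hc : c ∈ Subgroup.normalizer (N : Set (Equiv.Perm X))) (a : ↥N) :
    ((phi N c hc a : ↥N) : Equiv.Perm X) = c * (a : Equiv.Perm X) * c⁻¹ := rfl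

lemma phi_inv_phi (c : Equiv.Perm X) (hc : c ∈ Subgroup.normalizer (N : Set (Equiv.Perm X))) (a : ↥N) :
    phi N c hc (phi N c⁻¹ (inv_mem hc) a) = a := by
  apply Subtype.ext
  rw [phi_coe, phi_coe]
  group

lemma step (c : Equiv.Perm X) (hc : c ∈ Subgroup.normalizer (N : Set (Equiv.Perm X))) (k : ↥N) (x : X) :
    c ((k : Equiv.Perm X) x) = ((phi N c hc k : ↥N) : Equiv.Perm X) (c x) := by
  have : c * (k : Equiv.Perm X) = ((phi N c hc k : ↥N) : Equiv.Perm X) * c := by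
    rw [phi_coe]
    group
  calc c ((k : Equiv.Perm X) x) = (c * (k : Equiv.Perm X)) x := rfl
    _ = (((phi N c hc k : ↥N) : Equiv.Perm X) * c) x := by rw [this]
    _ = _ := rfl

lemma invol_unique (hp : p.Prime) (hodd : Odd p) (a : ↥N) (ha : a ^ 2 = 1) :
    a = 1 ∨ a = tt p N e := by
  have hw : (2 : ℕ) • (Multiplicative.toAdd (e a)) = 0 := by
    have h1 : (e a) ^ 2 = 1 := by rw [← map_pow, ha, map_one]
    have := congrArg Multiplicative.toAdd h1
    rwa [toAdd_pow, toAdd_one] at this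
  have h1 : (2 : ZMod p) * (Multiplicative.toAdd (e a)).1 = 0 := by
    have := congrArg Prod.fst hw
    rwa [Prod.smul_fst, nsmul_eq_mul, Nat.cast_ofNat] at this
  have h2 : (2 : ZMod (2*p)) * (Multiplicative.toAdd (e a)).2 = 0 := by
    have := congrArg Prod.snd hw
    rwa [Prod.smul_snd, nsmul_eq_mul, Nat.cast_ofNat] at this
  have hfst : (Multiplicative.toAdd (e a)).1 = 0 := aux_two_mul_zero_p p hp hodd _ h1
  have hsnd := aux_two_mul_zero p hp.ne_zero _ h2
  have hrec : a = e.symm (Multiplicative.ofAdd (Multiplicative.toAdd (e a))) := by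
    rw [ofAdd_toAdd, MulEquiv.symm_apply_apply]
  rcases hsnd with h | h
  · left
    rw [hrec]
    have : Multiplicative.toAdd (e a) = 0 := Prod.ext hfst h
    rw [this, ofAdd_zero, map_one]
  · right
    rw [hrec, tt]
    congr 1
    rw [← Prod.mk.eta (p := Multiplicative.toAdd (e a)), hfst, h]

lemma phi_tt (hp : p.Prime) (hodd : Odd p) (c : Equiv.Perm X) (hc : c ∈ Subgroup.normalizer (N : Set (Equiv.Perm X))) :
    phi N c hc (tt p N e) = tt p N e := by
  have h1 : (phi N c hc (tt p N e)) ^ 2 = 1 := by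
    rw [← map_pow, tt_sq, map_one]
  rcases invol_unique p N e hp hodd _ h1 with h | h
  · exfalso
    apply tt_ne p N e hp.ne_zero
    have : ((phi N c hc (tt p N e) : ↥N) : Equiv.Perm X) = 1 := by rw [h]; rfl
    rw [phi_coe] at this
    have h2 : (tt p N e : Equiv.Perm X) = 1 := by
      have := congrArg (fun z => c⁻¹ * z * c) this
      rw [show c⁻¹ * (c * (tt p N e : Equiv.Perm X) * c⁻¹) * c
        = (tt p N e : Equiv.Perm X) by group, show c⁻¹ * 1 * c = 1 by group] at this
      exact this
    exact Subtype.ext h2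
  · exact h

include e in
lemma pow2p_one (a : ↥N) : (a ^ 2) ^ p = 1 := by
  apply e.injective
  rw [← pow_mul, map_pow, exp2p, map_one]

include e in
lemma sigconj (c : Equiv.Perm X) (hc : c ∈ Subgroup.normalizer (N : Set (Equiv.Perm X))) :
    ∃ b : ↥N, b ^ p = 1 ∧ c * sigma N x₀ hreg * c⁻¹ = (b : Equiv.Perm X) * sigma N x₀ hreg := by
  set a₀ : ↥N := (bij N x₀ hreg).symm (c⁻¹ x₀) with ha₀def
  have ha₀ : ((a₀ : ↥N) : Equiv.Perm X) x₀ = c⁻¹ x₀ := by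
    have := (bij N x₀ hreg).apply_symm_apply (c⁻¹ x₀)
    rwa [← ha₀def, bij_apply] at this
  refine ⟨((phi N c hc a₀)⁻¹) ^ 2, pow2p_one p N e _, ?_⟩
  have hcx₀ : c x₀ = ((((phi N c hc a₀)⁻¹ : ↥N) : Equiv.Perm X)) x₀ := by
    have h0 : ((phi N c hc a₀ : ↥N) : Equiv.Perm X) (c x₀) = x₀ := by
      rw [phi_coe]
      show c ((a₀ : Equiv.Perm X) (c⁻¹ (c x₀))) = x₀
      rw [Equiv.Perm.inv_def, Equiv.symm_apply_apply, ha₀]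
      show (c * c⁻¹) x₀ = x₀
      rw [mul_inv_cancel]
      rfl
    have h1 := congrArg (⇑(((phi N c hc a₀ : ↥N) : Equiv.Perm X)⁻¹)) h0
    rw [Equiv.Perm.inv_def, Equiv.symm_apply_apply] at h1
    rw [Subgroup.coe_inv]
    exact h1
  ext x
  obtain ⟨m, rfl⟩ := (bij N x₀ hreg).surjective x
  -- RHS
  have hrhs : ((((phi N c hc a₀)⁻¹ ^ 2 : ↥N) : Equiv.Perm X) * sigma N x₀ hreg)
      (bij N x₀ hreg m) = bij N x₀ hreg ((phi N c hc a₀)⁻¹ ^ 2 * m⁻¹) := by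
    rw [Equiv.Perm.mul_apply, sigma_bij, bij_mul]
  -- LHS
  have hstep1 : c⁻¹ (bij N x₀ hreg m)
      = bij N x₀ hreg (phi N c⁻¹ (inv_mem hc) m * a₀) := by
    rw [bij_apply, step N c⁻¹ (inv_mem hc) m x₀, ← ha₀, ← bij_apply N x₀ hreg a₀, bij_mul]
  have hlhs : (c * sigma N x₀ hreg * c⁻¹) (bij N x₀ hreg m)
      = bij N x₀ hreg ((phi N c hc ((phi N c⁻¹ (inv_mem hc) m * a₀)⁻¹)) * (phi N c hc a₀)⁻¹) := by
    show c (sigma N x₀ hreg (c⁻¹ (bij N x₀ hreg m))) = _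
    rw [hstep1, sigma_bij, bij_apply, step N c hc _ x₀, hcx₀,
      ← bij_apply N x₀ hreg ((phi N c hc a₀)⁻¹), bij_mul]
  rw [hlhs, hrhs]
  apply congrArg
  rw [map_inv, map_mul, phi_inv_phi]
  have hcomm := Ncomm p N e
  rw [mul_inv_rev, pow_two]
  rw [hcomm ((phi N c hc a₀)⁻¹ * m⁻¹) ((phi N c hc a₀)⁻¹)]
  rw [mul_assoc]

lemma ssconj (hp : p.Prime) (hodd : Odd p) (c : Equiv.Perm X) (hc : c ∈ Subgroup.normalizer (N : Set (Equiv.Perm X))) :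
    ∃ b : ↥N, b ^ p = 1 ∧ c * ss p N e x₀ hreg * c⁻¹ = (b : Equiv.Perm X) * ss p N e x₀ hreg := by
  obtain ⟨b, hb, hbs⟩ := sigconj p N e x₀ hreg c hc
  refine ⟨b, hb, ?_⟩
  have h1 : c * ss p N e x₀ hreg * c⁻¹
      = (c * (tt p N e : Equiv.Perm X) * c⁻¹) * (c * sigma N x₀ hreg * c⁻¹) := by
    rw [ss]
    group
  rw [h1, ← phi_coe N c hc, phi_tt p N e hp hodd c hc, hbs, ss]
  rw [← mul_assoc, ← Subgroup.coe_mul, Ncomm p N e (tt p N e) b, Subgroup.coe_mul, mul_assoc]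

lemma conj_memM (hp : p.Prime) (hodd : Odd p) (c : Equiv.Perm X) (hc : c ∈ Subgroup.normalizer (N : Set (Equiv.Perm X))) :
    ∀ m ∈ MM p N e x₀ hreg hp.ne_zero, c * m * c⁻¹ ∈ MM p N e x₀ hreg hp.ne_zero := by
  rintro m ⟨⟨n, g⟩, rfl⟩
  have hanp : (phi N c hc (e.symm (jj p hp.ne_zero n))) ^ p = 1 := by
    rw [← map_pow, an_pow, map_one]
  rcases hg_cases g with rfl | rfl
  · have hm : psi p N e x₀ hreg hp.ne_zero ⟨n, 1⟩
        = ((e.symm (jj p hp.ne_zero n) : ↥N) : Equiv.Perm X) := by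
      rw [psi_apply]
      show f1 p N e hp.ne_zero n * f2 p N e x₀ hreg 1 = _
      rw [map_one, mul_one, f1_apply]
    rw [hm, ← phi_coe N c hc]
    exact memM_one p N e x₀ hreg hp.ne_zero _ hanp
  · have hm : psi p N e x₀ hreg hp.ne_zero ⟨n, Multiplicative.ofAdd 1⟩
        = ((e.symm (jj p hp.ne_zero n) : ↥N) : Equiv.Perm X) * ss p N e x₀ hreg := by
      rw [psi_apply]
      show f1 p N e hp.ne_zero n * f2 p N e x₀ hreg (Multiplicative.ofAdd 1) = _
      rw [f2_gen, f1_apply]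
    rw [hm]
    obtain ⟨b, hb, hbs⟩ := ssconj p N e x₀ hreg hp hodd c hc
    have h2 : c * (((e.symm (jj p hp.ne_zero n) : ↥N) : Equiv.Perm X) * ss p N e x₀ hreg) * c⁻¹
        = ((phi N c hc (e.symm (jj p hp.ne_zero n)) * b : ↥N) : Equiv.Perm X)
          * ss p N e x₀ hreg := by
      have : c * (((e.symm (jj p hp.ne_zero n) : ↥N) : Equiv.Perm X) * ss p N e x₀ hreg) * c⁻¹
          = (c * ((e.symm (jj p hp.ne_zero n) : ↥N) : Equiv.Perm X) * c⁻¹)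
            * (c * ss p N e x₀ hreg * c⁻¹) := by group
      rw [this, ← phi_coe N c hc, hbs, Subgroup.coe_mul]
      rw [mul_assoc]
    rw [h2]
    apply memM_ss
    have hcomm : Commute (phi N c hc (e.symm (jj p hp.ne_zero n))) b := Ncomm p N e _ _
    rw [hcomm.mul_pow, hanp, hb, one_mul]

noncomputable def MMequiv (hp : p ≠ 0) (hodd : Odd p) :
    ↥(MM p N e x₀ hreg hp) ≃* GenDihedral p :=
  (MonoidHom.ofInjective (psi_inj p N e x₀ hreg hp hodd)).symm

end Defs

end GD

/-- Theorem 4.1, first case: if a separable extension of degree `2 p ^ 2` (Galois data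
`(G, G')`, `p` an odd prime) has a Hopf Galois structure of type `C_p × C_{2p}`, then it
has one of type `(C_p × C_p) ⋊ C_2`. -/
theorem abelian_type_implies_genDihedral_type (p : ℕ) (hp : p.Prime) (hodd : Odd p)
    (G : Type*) [Group G] [Finite G] (G' : Subgroup G)
    (hindex : G'.index = 2 * p ^ 2)
    (h : ∃ N : Subgroup (Equiv.Perm (G ⧸ G')),
        IsRegularSubgroup N ∧
        Nonempty (↥N ≃* Multiplicative (ZMod p × ZMod (2 * p))) ∧
        ∀ g : G, MulAction.toPermHom G (G ⧸ G') g ∈ Subgroup.normalizer (N : Set (Equiv.Perm (G ⧸ G')))) :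
    ∃ M : Subgroup (Equiv.Perm (G ⧸ G')),
        IsRegularSubgroup M ∧
        Nonempty (↥M ≃* GenDihedral p) ∧
        ∀ g : G, MulAction.toPermHom G (G ⧸ G') g ∈ Subgroup.normalizer (M : Set (Equiv.Perm (G ⧸ G'))) := by
  obtain ⟨N, hreg, ⟨e⟩, hnorm⟩ := h
  set x₀ : G ⧸ G' := ((1 : G) : G ⧸ G') with hx₀
  refine ⟨GD.MM p N e x₀ hreg hp.ne_zero,
    ⟨GD.Mtrans p N e x₀ hreg hp.ne_zero hodd, GD.Mfree p N e x₀ hreg hp.ne_zero hodd⟩,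
    ⟨GD.MMequiv p N e x₀ hreg hp.ne_zero hodd⟩, ?_⟩
  intro g
  rw [Subgroup.mem_normalizer_iff]
  intro m
  constructor
  · intro hm
    exact GD.conj_memM p N e x₀ hreg hp hodd _ (hnorm g) m hm
  · intro hm
    have h2 := GD.conj_memM p N e x₀ hreg hp hodd _ (inv_mem (hnorm g)) _ hm
    convert h2 using 1
    group
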